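/- Let V have basis {x,y} over k and let I be the ideal of T(V) generated by {xy - x, yx - y}. Then the degree-2 graded component of the associated graded algebra gr(T(V)/I) is zero, while the degree-2 component of T(V)/⟨xy, yx⟩ is 2-dimensional over k (with basis {x², y²}); hence T(V)/I is not of PBW type with respect to P = span{xy - x, yx - y}. -/

import Mathlib

set_option maxHeartbeats 1000000


/-- The `m`-th filtered component of a graded algebra. -/
def filt {k T : Type*} [CommSemiring k] [Ring T] [Algebra k T]
    (𝒜 : ℕ → Submodule k T) (m : ℕ) : Submodule k T :=
  ⨆ i ≤ m, 𝒜 i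

/-- The leading homogeneous part of an element of a graded algebra. -/
noncomputable def LH {k T : Type*} [CommSemiring k] [Ring T] [Algebra k T]
    (𝒜 : ℕ → Submodule k T) [GradedAlgebra 𝒜] (f : T) : T :=
  GradedAlgebra.proj 𝒜 (sSup {i | GradedAlgebra.proj 𝒜 i f ≠ 0}) f

/-- The two-sided ideal generated by a subset, as a `k`-submodule. -/
def twoSidedSpan (k : Type*) {T : Type*} [CommSemiring k] [Ring T] [Algebra k T]
    (P : Set T) : Submodule k T :=
  Submodule.span k {x | ∃ a b : T, ∃ p ∈ P, x = a * p * b}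

section Aux
variable {k : Type*} [Field k]

lemma mem_twoSidedSpan_of_gen {T : Type*} [Ring T] [Algebra k T]
    {S : Set T} {a p b : T} (hp : p ∈ S) : a * p * b ∈ twoSidedSpan k S :=
  Submodule.subset_span ⟨a, b, p, hp, rfl⟩

lemma twoSidedSpan_apply_eq_zero {T A : Type*} [Ring T] [Algebra k T] [Ring A] [Algebra k A]
    (φ : T →ₐ[k] A) {S : Set T} (h : ∀ p ∈ S, φ p = 0) {t : T}
    (ht : t ∈ twoSidedSpan k S) : φ t = 0 := by
  have : twoSidedSpan k S ≤ LinearMap.ker φ.toLinearMap := by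
    rw [twoSidedSpan, Submodule.span_le]
    rintro _ ⟨a, c, p, hp, rfl⟩
    simp [LinearMap.mem_ker, map_mul, h p hp]
  exact this ht

variable {V : Type*} [AddCommGroup V] [Module k V] (b : Module.Basis (Fin 2) k V)

/-- the algebra map sending the `i`-th basis vector to `X` and the other to `0`. -/
noncomputable def xfun (i : Fin 2) : TensorAlgebra k V →ₐ[k] Polynomial k :=
  TensorAlgebra.lift k ((b.coord i).smulRight Polynomial.X)

lemma xfun_ι (i : Fin 2) (v : V) : xfun b i (TensorAlgebra.ι k v) = b.repr v i • Polynomial.X := by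
  rw [xfun, TensorAlgebra.lift_ι_apply, LinearMap.smulRight_apply, Module.Basis.coord_apply]

lemma xfun_self (i : Fin 2) : xfun b i (TensorAlgebra.ι k (b i)) = Polynomial.X := by
  simp [xfun_ι]

lemma xfun_other (i j : Fin 2) (h : i ≠ j) : xfun b i (TensorAlgebra.ι k (b j)) = 0 := by
  simp [xfun_ι, Module.Basis.repr_self, Finsupp.single_apply, h.symm]

lemma XX_ne_zero : (Polynomial.X * Polynomial.X : Polynomial k) ≠ 0 :=
  mul_ne_zero Polynomial.X_ne_zero Polynomial.X_ne_zero

end Aux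

/-- for `I = ⟨xy - x, yx - y⟩` in `T(V)`, `V = span{x,y}`:
the degree-2 component of `gr(T(V)/I)` is zero (every degree-2 element is
congruent mod `I` to an element of filtered degree 1); the degree-2 component
of `T(V)/⟨xy, yx⟩` is 2-dimensional with basis the images of `x², y²`; hence
`T(V)/I` is not of PBW type with respect to `P = span{xy - x, yx - y}`,
i.e. `⟨π(P)⟩ ≠ ⟨LH(I)⟩`. -/
theorem stmt5 {k V : Type*} [Field k] [AddCommGroup V] [Module k V]
    (b : Module.Basis (Fin 2) k V) :
    letI 𝒜 : ℕ → Submodule k (TensorAlgebra k V) :=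
      fun n => LinearMap.range (TensorAlgebra.ι k : V →ₗ[k] TensorAlgebra k V) ^ n
    letI x : TensorAlgebra k V := TensorAlgebra.ι k (b 0)
    letI y : TensorAlgebra k V := TensorAlgebra.ι k (b 1)
    letI I := twoSidedSpan k {x * y - x, y * x - y}
    letI J := twoSidedSpan k {x * y, y * x}
    (∀ w ∈ 𝒜 2, ∃ u ∈ filt 𝒜 1, w - u ∈ I) ∧
    (LinearIndependent k ![J.mkQ (x * x), J.mkQ (y * y)] ∧
      Submodule.map J.mkQ (𝒜 2) =
        Submodule.span k {J.mkQ (x * x), J.mkQ (y * y)}) ∧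
    J ≠ twoSidedSpan k (LH 𝒜 '' (I : Set (TensorAlgebra k V))) := by
  set x : TensorAlgebra k V := TensorAlgebra.ι k (b 0) with hxdef
  set y : TensorAlgebra k V := TensorAlgebra.ι k (b 1) with hydef
  set 𝒜 : ℕ → Submodule k (TensorAlgebra k V) :=
    fun n => LinearMap.range (TensorAlgebra.ι k : V →ₗ[k] TensorAlgebra k V) ^ n with h𝒜
  set I := twoSidedSpan k {x * y - x, y * x - y} with hI
  set J := twoSidedSpan k {x * y, y * x} with hJ
  letI : GradedAlgebra 𝒜 := TensorAlgebra.gradedAlgebra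
  -- memberships in graded pieces
  have hxM : x ∈ LinearMap.range (TensorAlgebra.ι k : V →ₗ[k] TensorAlgebra k V) := ⟨b 0, rfl⟩
  have hyM : y ∈ LinearMap.range (TensorAlgebra.ι k : V →ₗ[k] TensorAlgebra k V) := ⟨b 1, rfl⟩
  have hx1 : x ∈ 𝒜 1 := by
    show x ∈ LinearMap.range (TensorAlgebra.ι k : V →ₗ[k] TensorAlgebra k V) ^ 1
    rw [pow_one]; exact hxM
  have hy1 : y ∈ 𝒜 1 := by
    show y ∈ LinearMap.range (TensorAlgebra.ι k : V →ₗ[k] TensorAlgebra k V) ^ 1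
    rw [pow_one]; exact hyM
  have h2eq : 𝒜 2 = LinearMap.range (TensorAlgebra.ι k : V →ₗ[k] TensorAlgebra k V) *
      LinearMap.range (TensorAlgebra.ι k : V →ₗ[k] TensorAlgebra k V) := pow_two _
  have hxx2 : x * x ∈ 𝒜 2 := by rw [h2eq]; exact Submodule.mul_mem_mul hxM hxM
  have hyy2 : y * y ∈ 𝒜 2 := by rw [h2eq]; exact Submodule.mul_mem_mul hyM hyM
  -- generators of I
  have genI : ∀ (a c p : TensorAlgebra k V), p ∈ ({x * y - x, y * x - y} : Set _) →
      a * p * c ∈ I := fun a c p hp => mem_twoSidedSpan_of_gen hp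
  have hxyI : x * y - x ∈ I := by
    simpa using genI 1 1 _ (Set.mem_insert _ _)
  have hyxI : y * x - y ∈ I := by
    simpa using genI 1 1 _ (Set.mem_insert_of_mem _ rfl)
  have hxxI : x * x - x ∈ I := by
    have e : x * x - x = (x * (y * x - y) * 1 + 1 * (x * y - x) * 1) - 1 * (x * y - x) * x := by
      noncomm_ring
    rw [e]
    exact I.sub_mem (I.add_mem (genI _ _ _ (Set.mem_insert_of_mem _ rfl))
      (genI _ _ _ (Set.mem_insert _ _))) (genI _ _ _ (Set.mem_insert _ _))
  have hyyI : y * y - y ∈ I := by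
    have e : y * y - y = (y * (x * y - x) * 1 + 1 * (y * x - y) * 1) - 1 * (y * x - y) * y := by
      noncomm_ring
    rw [e]
    exact I.sub_mem (I.add_mem (genI _ _ _ (Set.mem_insert _ _))
      (genI _ _ _ (Set.mem_insert_of_mem _ rfl))) (genI _ _ _ (Set.mem_insert_of_mem _ rfl))
  -- generators of J
  have genJ : ∀ (a c p : TensorAlgebra k V), p ∈ ({x * y, y * x} : Set _) →
      a * p * c ∈ J := fun a c p hp => mem_twoSidedSpan_of_gen hp
  have hxyJ : x * y ∈ J := by simpa using genJ 1 1 _ (Set.mem_insert _ _)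
  have hyxJ : y * x ∈ J := by simpa using genJ 1 1 _ (Set.mem_insert_of_mem _ rfl)
  -- the separating functionals
  have hφJ : ∀ i : Fin 2, ∀ p ∈ ({x * y, y * x} : Set (TensorAlgebra k V)), xfun b i p = 0 := by
    intro i p hp
    rcases hp with rfl | rfl <;> fin_cases i <;>
      simp [hxdef, hydef, map_mul, xfun_self, xfun_other, Fin.ne_of_val_ne]
  have hφxx : ∀ i : Fin 2, xfun b i (x * x) = if i = 0 then Polynomial.X * Polynomial.X else 0 := by
    intro i; fin_cases i <;> simp [hxdef, map_mul, xfun_self, xfun_other, Fin.ne_of_val_ne]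
  have hφyy : ∀ i : Fin 2, xfun b i (y * y) = if i = 1 then Polynomial.X * Polynomial.X else 0 := by
    intro i; fin_cases i <;> simp [hydef, map_mul, xfun_self, xfun_other, Fin.ne_of_val_ne]
  -- expansion of products
  have hexp : ∀ u v : V, TensorAlgebra.ι k u * TensorAlgebra.ι k v =
      (b.repr u 0 * b.repr v 0) • (x * x) + (b.repr u 0 * b.repr v 1) • (x * y) +
      (b.repr u 1 * b.repr v 0) • (y * x) + (b.repr u 1 * b.repr v 1) • (y * y) := by
    intro u v
    conv_lhs => rw [← b.sum_repr u, ← b.sum_repr v]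
    simp only [Fin.sum_univ_two, map_add, map_smul, add_mul, mul_add, smul_mul_assoc,
      mul_smul_comm, smul_smul, smul_add, ← hxdef, ← hydef]
    module
  refine ⟨?_, ⟨?_, ?_⟩, ?_⟩
  · -- Part 1: degree 2 component dies in gr
    have hfilt : ∀ t ∈ 𝒜 1, t ∈ filt 𝒜 1 := fun t ht =>
      Submodule.mem_iSup_of_mem 1 (Submodule.mem_iSup_of_mem le_rfl ht)
    have hxxS : x * x ∈ filt 𝒜 1 ⊔ I := by
      have e : x * x = x + (x * x - x) := by abel
      rw [e]
      exact Submodule.add_mem _ (Submodule.mem_sup_left (hfilt _ hx1))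
        (Submodule.mem_sup_right hxxI)
    have hxyS : x * y ∈ filt 𝒜 1 ⊔ I := by
      have e : x * y = x + (x * y - x) := by abel
      rw [e]
      exact Submodule.add_mem _ (Submodule.mem_sup_left (hfilt _ hx1))
        (Submodule.mem_sup_right hxyI)
    have hyxS : y * x ∈ filt 𝒜 1 ⊔ I := by
      have e : y * x = y + (y * x - y) := by abel
      rw [e]
      exact Submodule.add_mem _ (Submodule.mem_sup_left (hfilt _ hy1))
        (Submodule.mem_sup_right hyxI)
    have hyyS : y * y ∈ filt 𝒜 1 ⊔ I := by
      have e : y * y = y + (y * y - y) := by abel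
      rw [e]
      exact Submodule.add_mem _ (Submodule.mem_sup_left (hfilt _ hy1))
        (Submodule.mem_sup_right hyyI)
    have hle : 𝒜 2 ≤ filt 𝒜 1 ⊔ I := by
      rw [h2eq, Submodule.mul_le]
      rintro _ ⟨u, rfl⟩ _ ⟨v, rfl⟩
      rw [hexp u v]
      exact Submodule.add_mem _ (Submodule.add_mem _ (Submodule.add_mem _
        (Submodule.smul_mem _ _ hxxS) (Submodule.smul_mem _ _ hxyS))
        (Submodule.smul_mem _ _ hyxS)) (Submodule.smul_mem _ _ hyyS)
    intro w hw
    obtain ⟨u, hu, v, hv, huv⟩ := Submodule.mem_sup.mp (hle hw)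
    exact ⟨u, hu, by rw [← huv, add_sub_cancel_left]; exact hv⟩
  · -- Part 2a: linear independence
    rw [linearIndependent_fin2]
    constructor
    · intro h
      simp only [Matrix.cons_val_one, Matrix.head_cons] at h
      have hmem : y * y ∈ J := (Submodule.Quotient.mk_eq_zero J).mp
        (by rw [← Submodule.mkQ_apply]; exact h)
      have h0 := twoSidedSpan_apply_eq_zero (xfun b 1) (hφJ 1) hmem
      rw [hφyy 1, if_pos rfl] at h0
      exact XX_ne_zero h0
    · intro a h
      simp only [Matrix.cons_val_one, Matrix.head_cons, Matrix.cons_val_zero] at h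
      have hq : J.mkQ (a • (y * y) - x * x) = 0 := by
        rw [map_sub, map_smul, h, sub_self]
      have hmem : a • (y * y) - x * x ∈ J := (Submodule.Quotient.mk_eq_zero J).mp
        (by rw [← Submodule.mkQ_apply]; exact hq)
      have h0 := twoSidedSpan_apply_eq_zero (xfun b 0) (hφJ 0) hmem
      rw [map_sub, map_smul, hφxx 0, if_pos rfl, hφyy 0, if_neg (by decide), smul_zero,
        zero_sub, neg_eq_zero] at h0
      exact XX_ne_zero h0
  · -- Part 2b: the image of the degree 2 part
    apply le_antisymm
    · refine Submodule.map_le_iff_le_comap.mpr (le_trans (le_of_eq h2eq)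
        (Submodule.mul_le.mpr ?_))
      rintro _ ⟨u, rfl⟩ _ ⟨v, rfl⟩
      have h0 : J.mkQ (x * y) = 0 := by
        rw [Submodule.mkQ_apply]; exact (Submodule.Quotient.mk_eq_zero J).mpr hxyJ
      have h0' : J.mkQ (y * x) = 0 := by
        rw [Submodule.mkQ_apply]; exact (Submodule.Quotient.mk_eq_zero J).mpr hyxJ
      simp only [Submodule.mem_comap, hexp u v, map_add, map_smul, h0, h0', smul_zero,
        add_zero, zero_add]
      exact Submodule.add_mem _
        (Submodule.smul_mem _ _ (Submodule.subset_span (Set.mem_insert _ _)))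
        (Submodule.smul_mem _ _ (Submodule.subset_span (Set.mem_insert_of_mem _ rfl)))
    · rw [Submodule.span_le]
      rintro t ht
      rcases ht with rfl | rfl
      · exact Submodule.mem_map_of_mem hxx2
      · exact Submodule.mem_map_of_mem hyy2
  · -- Part 3: not PBW
    intro heq
    have hx2φ : xfun b 0 (x * x) ≠ 0 := by
      rw [hφxx 0, if_pos rfl]; exact XX_ne_zero
    -- decompositions of x*x - x
    have key : ∀ i, GradedAlgebra.proj 𝒜 i (x * x - x) =
        (DirectSum.decompose 𝒜 (x * x) i : TensorAlgebra k V) -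
        (DirectSum.decompose 𝒜 x i : TensorAlgebra k V) := by
      intro i
      rw [GradedAlgebra.proj_apply, DirectSum.decompose_sub]
      rfl
    have p2 : GradedAlgebra.proj 𝒜 2 (x * x - x) = x * x := by
      rw [key 2, DirectSum.decompose_of_mem_same 𝒜 hxx2,
        DirectSum.decompose_of_mem_ne 𝒜 hx1 (by norm_num : (1 : ℕ) ≠ 2), sub_zero]
    have p1 : GradedAlgebra.proj 𝒜 1 (x * x - x) = -x := by
      rw [key 1, DirectSum.decompose_of_mem_same 𝒜 hx1,
        DirectSum.decompose_of_mem_ne 𝒜 hxx2 (by norm_num : (2 : ℕ) ≠ 1), zero_sub]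
    have pn : ∀ i : ℕ, i ≠ 1 → i ≠ 2 → GradedAlgebra.proj 𝒜 i (x * x - x) = 0 := by
      intro i h1 h2
      rw [key i, DirectSum.decompose_of_mem_ne 𝒜 hxx2 (Ne.symm h2),
        DirectSum.decompose_of_mem_ne 𝒜 hx1 (Ne.symm h1), sub_zero]
    have hxxne : x * x ≠ 0 := fun h => hx2φ (by rw [h, map_zero])
    have hxne : x ≠ 0 := by
      intro h
      apply Polynomial.X_ne_zero (R := k)
      rw [← xfun_self b 0, ← hxdef, h, map_zero]
    have hset : {i | GradedAlgebra.proj 𝒜 i (x * x - x) ≠ 0} = {2, 1} := by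
      ext i
      simp only [Set.mem_setOf_eq, Set.mem_insert_iff, Set.mem_singleton_iff]
      constructor
      · intro h
        by_contra hc
        push_neg at hc
        exact h (pn i hc.2 hc.1)
      · rintro (rfl | rfl)
        · rw [p2]; exact hxxne
        · rw [p1]; simpa using hxne
    have hsup : ((2 : ℕ) ⊔ 1) = 2 := by norm_num
    have hLH : LH 𝒜 (x * x - x) = x * x := by
      rw [LH, hset, csSup_pair, hsup, p2]
    apply hx2φ
    refine twoSidedSpan_apply_eq_zero (xfun b 0) (hφJ 0) ?_
    rw [← hJ, heq]
    refine Submodule.subset_span ⟨1, 1, x * x, ⟨x * x - x, hxxI, hLH⟩, ?_⟩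
    rw [one_mul, mul_one]
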